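/- arXiv:2412.07865 — 2 statements merged into one kernel-verified Lean document; each statement's English description precedes it below -/
import Mathlib

section
/- Let P: ℝ^N → ℝ be twice continuously differentiable and δ-strongly convex, V > 0, and g(λ) := argmin_y [V·P(y) - ∑_n λ_n y_n] with interior minimizer. Then every partial derivative of g is bounded: |∂g_k/∂λ_m(λ)| ≤ N/(δV) for all k, m. -/
open ContinuousLinearMap

-- first order condition
theorem aux_foc (N : ℕ) (P : (Fin N → ℝ) → ℝ) (V : ℝ)
    (hP : ContDiff ℝ 2 P)
    (g : (Fin N → ℝ) → (Fin N → ℝ))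
    (hmin : ∀ lam y : Fin N → ℝ,
      V * P (g lam) - ∑ n, lam n * g lam n ≤ V * P y - ∑ n, lam n * y n)
    (μ : Fin N → ℝ) (z : Fin N → ℝ) :
    V * fderiv ℝ P (g μ) z = ∑ n, μ n * z n := by
  set L : (Fin N → ℝ) →L[ℝ] ℝ := ∑ n, μ n • (proj n : (Fin N → ℝ) →L[ℝ] ℝ) with hL
  have hLapp : ∀ y, L y = ∑ n, μ n * y n := by intro y; simp [hL, proj]
  have hp : HasFDerivAt P (fderiv ℝ P (g μ)) (g μ) :=
    ((hP.differentiable two_ne_zero) (g μ)).hasFDerivAt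
  have hh : HasFDerivAt (fun y => V * P y - ∑ n, μ n * y n)
      (V • fderiv ℝ P (g μ) - L) (g μ) := by
    have h2 : HasFDerivAt (fun y => L y) L (g μ) := L.hasFDerivAt
    simp only [hLapp] at h2
    exact (hp.const_mul V).sub h2
  have hloc : IsLocalMin (fun y => V * P y - ∑ n, μ n * y n) (g μ) :=
    IsMinOn.isLocalMin (fun y _ => hmin μ y) (Filter.univ_mem)
  have h0 : V • fderiv ℝ P (g μ) - L = 0 := by
    rw [← hh.fderiv]; exact hloc.fderiv_eq_zero
  have := congrFun (congrArg (fun (T : (Fin N → ℝ) →L[ℝ] ℝ) => (T : (Fin N → ℝ) → ℝ)) h0) z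
  simp only [ContinuousLinearMap.sub_apply, ContinuousLinearMap.smul_apply,
    ContinuousLinearMap.zero_apply, smul_eq_mul] at this
  rw [hLapp] at this
  linarith

-- strong monotonicity
theorem aux_mono (N : ℕ) (P : (Fin N → ℝ) → ℝ) (δ : ℝ)
    (hP : ContDiff ℝ 2 P)
    (hSC : ∀ y z : Fin N → ℝ,
      δ * ∑ i, (z i) ^ 2 ≤ fderiv ℝ (fun w => fderiv ℝ P w z) y z)
    (a b : Fin N → ℝ) :
    δ * ∑ i, (a i - b i) ^ 2 ≤ fderiv ℝ P a (a - b) - fderiv ℝ P b (a - b) := by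
  set z : Fin N → ℝ := a - b with hz
  have hQ : ContDiff ℝ 1 (fun w => fderiv ℝ P w z) := by
    exact (hP.fderiv_right (le_refl _)).clm_apply contDiff_const
  set γ : ℝ → (Fin N → ℝ) := fun t => b + t • z with hγdef
  have hγ : ∀ t : ℝ, HasDerivAt γ z t := by
    intro t
    exact ((hasDerivAt_id t).smul_const z).const_add b |>.congr_deriv (one_smul ℝ z)
  set f : ℝ → ℝ := fun t => fderiv ℝ P (γ t) z with hf
  have hfd : ∀ t : ℝ, HasDerivAt f (fderiv ℝ (fun w => fderiv ℝ P w z) (γ t) z) t := by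
    intro t
    exact ((hQ.differentiable one_ne_zero) (γ t)).hasFDerivAt.comp_hasDerivAt t (hγ t)
  obtain ⟨c, _, hc⟩ := exists_hasDerivAt_eq_slope f _ (by norm_num : (0:ℝ) < 1)
    (fun t _ => (hfd t).continuousAt.continuousWithinAt)
    (fun t _ => hfd t)
  have h1 : γ 1 = a := by simp [hγdef, hz]
  have h0 : γ 0 = b := by simp [hγdef]
  have := hSC (γ c) z
  rw [hc] at this
  simp only [h1, h0, hf] at this
  have hi : ∀ i, (a - b) i = a i - b i := fun i => rfl
  have heq : δ * ∑ i, (a i - b i) ^ 2 = δ * ∑ i, (z i) ^ 2 := by simp [hz, hi]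
  rw [heq, hz]
  linarith [this]

theorem aux_lip (N : ℕ) (P : (Fin N → ℝ) → ℝ) (δ V : ℝ) (hδ : 0 < δ) (hV : 0 < V)
    (g : (Fin N → ℝ) → (Fin N → ℝ))
    (foc : ∀ μ z : Fin N → ℝ, V * fderiv ℝ P (g μ) z = ∑ n, μ n * z n)
    (mono : ∀ a b : Fin N → ℝ,
      δ * ∑ i, (a i - b i) ^ 2 ≤ fderiv ℝ P a (a - b) - fderiv ℝ P b (a - b))
    (lam : Fin N → ℝ) (t : ℝ) (k m : Fin N) :
    |g (lam + t • (Pi.single m 1 : Fin N → ℝ)) k - g lam k| ≤ |t| / (δ * V) := by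
  set μ : Fin N → ℝ := lam + t • (Pi.single m 1 : Fin N → ℝ) with hμ
  set w : Fin N → ℝ := g μ - g lam with hw
  have hwi : ∀ i, w i = g μ i - g lam i := fun i => rfl
  have hδV : 0 < δ * V := mul_pos hδ hV
  set B : ℝ := |t| / (δ * V) with hB
  have hBnn : 0 ≤ B := by positivity
  have hkey : δ * ∑ i, (w i) ^ 2 ≤ t * w m / V := by
    have h1 := mono (g μ) (g lam)
    have h2 := foc μ w
    have h3 := foc lam w
    have h4 : fderiv ℝ P (g μ) w - fderiv ℝ P (g lam) w = t * w m / V := by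
      have hsub : V * fderiv ℝ P (g μ) w - V * fderiv ℝ P (g lam) w
          = ∑ n, (μ n - lam n) * w n := by
        rw [h2, h3, ← Finset.sum_sub_distrib]
        congr 1; ext n; ring
      have hs : ∑ n, (μ n - lam n) * w n = t * w m := by
        have hd : ∀ n, (μ n - lam n) = t * (Pi.single m 1 : Fin N → ℝ) n := fun n => by
          simp [hμ]
        simp only [hd]
        rw [Finset.sum_eq_single m]
        · simp
        · intro n _ hn; simp [Pi.single_apply, hn]
        · intro h; simp at h
      rw [hs] at hsub
      field_simp
      linarith
    calc δ * ∑ i, (w i) ^ 2 = δ * ∑ i, (g μ i - g lam i) ^ 2 := by simp [hwi]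
      _ ≤ fderiv ℝ P (g μ) w - fderiv ℝ P (g lam) w := h1
      _ = t * w m / V := h4
  have hterm : ∀ j : Fin N, (w j) ^ 2 ≤ ∑ i, (w i) ^ 2 := fun j =>
    Finset.single_le_sum (fun i _ => sq_nonneg (w i)) (Finset.mem_univ j)
  have h7 : t * w m ≤ |t| * |w m| := (le_abs_self _).trans (le_of_eq (abs_mul t (w m)))
  -- bound |w m|
  have hwm : |w m| ≤ B := by
    have h5 : δ * (w m) ^ 2 ≤ t * w m / V :=
      le_trans (by nlinarith [hterm m]) hkey
    have h6 : δ * V * (w m) ^ 2 ≤ |t| * |w m| := by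
      have h5' := (le_div_iff₀ hV).mp h5
      linarith
    rcases eq_or_lt_of_le (abs_nonneg (w m)) with h | h
    · rw [← h]; exact hBnn
    · rw [hB, le_div_iff₀ hδV]
      nlinarith [sq_abs (w m)]
  -- bound |w k|
  have h8 : δ * (w k) ^ 2 ≤ |t| * B / V := by
    have hc1 : t * w m / V ≤ |t| * |w m| / V := by gcongr
    have hc2 : |t| * |w m| / V ≤ |t| * B / V := by gcongr
    nlinarith [hterm k, hkey]
  have hBid : δ * B ^ 2 = |t| * B / V := by
    rw [hB]; field_simp
  have h9 : (w k) ^ 2 ≤ B ^ 2 := by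
    rw [← hBid] at h8
    nlinarith
  have := Real.sqrt_le_sqrt h9
  rwa [Real.sqrt_sq_eq_abs, Real.sqrt_sq hBnn] at this


theorem aux_main (N : ℕ) (g : (Fin N → ℝ) → (Fin N → ℝ)) (δ V : ℝ)
    (hδ : 0 < δ) (hV : 0 < V)
    (lip : ∀ (lam : Fin N → ℝ) (t : ℝ) (k m : Fin N),
      |g (lam + t • (Pi.single m 1 : Fin N → ℝ)) k - g lam k| ≤ |t| / (δ * V))
    (lam : Fin N → ℝ) (k m : Fin N) :
    |fderiv ℝ (fun l => g l k) lam (Pi.single m 1)| ≤ N / (δ * V) := by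
  have hδV : 0 < δ * V := mul_pos hδ hV
  have hN : (1 : ℝ) ≤ N := by exact_mod_cast Nat.one_le_iff_ne_zero.mpr (Nat.pos_iff_ne_zero.mp k.pos)
  have hfinal : (1 : ℝ) / (δ * V) ≤ N / (δ * V) := by gcongr
  by_cases hd : DifferentiableAt ℝ (fun l => g l k) lam
  · set v : Fin N → ℝ := Pi.single m 1 with hv
    set c : ℝ := fderiv ℝ (fun l => g l k) lam v with hc
    have hγ : HasDerivAt (fun t : ℝ => lam + t • v) v 0 := by
      have := ((hasDerivAt_id (0 : ℝ)).smul_const v).const_add lam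
      simpa using this
    have hl : HasFDerivAt (fun l => g l k) (fderiv ℝ (fun l => g l k) lam)
        (lam + (0 : ℝ) • v) := by
      simpa using hd.hasFDerivAt
    have hcomp : HasDerivAt (fun t : ℝ => g (lam + t • v) k) c 0 :=
      by have := hl.comp_hasDerivAt 0 hγ; exact this
    have hfd := hcomp.hasFDerivAt
    have hbound : ∀ s : ℝ, ‖g (lam + s • v) k - g (lam + (0:ℝ) • v) k‖
        ≤ (1 / (δ * V)) * ‖s - 0‖ := by
      intro s
      have := lip lam s k m
      simp only [Real.norm_eq_abs, sub_zero, zero_smul, add_zero]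
      rw [div_eq_mul_inv, mul_comm] at this
      rw [one_div, hv]
      simpa using this
    have hle : ‖ContinuousLinearMap.smulRight (1 : ℝ →L[ℝ] ℝ) c‖ ≤ 1 / (δ * V) := by
      apply hfd.le_of_lip' (by positivity)
      apply Filter.Eventually.of_forall
      intro s
      simpa using hbound s
    have hcle : |c| ≤ ‖ContinuousLinearMap.smulRight (1 : ℝ →L[ℝ] ℝ) c‖ := by
      have h1 : (ContinuousLinearMap.smulRight (1 : ℝ →L[ℝ] ℝ) c) 1 = c := by simp
      calc |c| = ‖(ContinuousLinearMap.smulRight (1 : ℝ →L[ℝ] ℝ) c) 1‖ := by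
            rw [h1]; rfl
        _ ≤ ‖ContinuousLinearMap.smulRight (1 : ℝ →L[ℝ] ℝ) c‖ * ‖(1:ℝ)‖ :=
            ContinuousLinearMap.le_opNorm _ _
        _ = ‖ContinuousLinearMap.smulRight (1 : ℝ →L[ℝ] ℝ) c‖ := by simp
    calc |c| ≤ 1 / (δ * V) := hcle.trans hle
      _ ≤ N / (δ * V) := hfinal
  · rw [fderiv_zero_of_not_differentiableAt hd]
    simp only [ContinuousLinearMap.zero_apply, abs_zero]
    positivity

/-- For `P : ℝ^N → ℝ` twice continuously differentiable and `δ`-strongly convex, `V > 0`,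
and `g λ := argmin_y (V P(y) - ∑ λ_n y_n)`, every partial derivative of `g` is bounded:
`|∂g_k/∂λ_m| ≤ N/(δ V)`. -/
theorem stmt10 (N : ℕ) (P : (Fin N → ℝ) → ℝ) (δ V : ℝ) (hδ : 0 < δ) (hV : 0 < V)
    (hP : ContDiff ℝ 2 P)
    (hSC : ∀ y z : Fin N → ℝ,
      δ * ∑ i, (z i) ^ 2 ≤ fderiv ℝ (fun w => fderiv ℝ P w z) y z)
    (g : (Fin N → ℝ) → (Fin N → ℝ))
    (hmin : ∀ lam y : Fin N → ℝ,
      V * P (g lam) - ∑ n, lam n * g lam n ≤ V * P y - ∑ n, lam n * y n) :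
    ∀ (lam : Fin N → ℝ) (k m : Fin N),
      |fderiv ℝ (fun l => g l k) lam (Pi.single m 1)| ≤ N / (δ * V) := by
  intro lam k m
  exact aux_main N g δ V hδ hV
    (aux_lip N P δ V hδ hV g (aux_foc N P V hP g hmin) (aux_mono N P δ hP hSC)) lam k m
end

section
/- Let f and f̂ be probability distributions over finitely many states, g_s(λ) the minimizer of V·P_s(y) - ∑_n λ_n(y_n - A_n) with each P_s δ-strongly convex and twice continuously differentiable. Suppose λ* satisfies ∑_s f_s g_{n,s}(λ*) = A_n and λ̂* satisfies ∑_s f̂_s g_{n,s}(λ̂*) = A_n for all n. Define d_n := ∑_s (f_s - f̂_s) g_{n,s}(λ*) and Ĥ with entries ĥ_{n,m} = ∑_s f̂_s ∂g_{m,s}(λ*)/∂λ_n, assumed invertible. Then λ̂* = λ* + Ĥ⁻¹ d + O(∑_s (f_s - f̂_s)²). -/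
open Finset
namespace S13


variable {N : ℕ}

/-- linear functional `x ↦ ∑ c n * x n` as a CLM. -/
noncomputable def lf (c : Fin N → ℝ) : (Fin N → ℝ) →L[ℝ] ℝ :=
  ∑ n, c n • ContinuousLinearMap.proj n

@[simp] lemma lf_apply (c x : Fin N → ℝ) : lf c x = ∑ n, c n * x n := by
  simp [lf]

lemma norm_le_sqrt (x : Fin N → ℝ) : ‖x‖ ≤ Real.sqrt (∑ n, x n ^ 2) := by
  refine (pi_norm_le_iff_of_nonneg (Real.sqrt_nonneg _)).mpr fun i => ?_
  rw [Real.norm_eq_abs, ← Real.sqrt_sq_eq_abs]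
  exact Real.sqrt_le_sqrt (Finset.single_le_sum
    (f := fun n => x n ^ 2) (fun _ _ => sq_nonneg _) (mem_univ i))

lemma cs (x y : Fin N → ℝ) :
    ∑ n, x n * y n ≤ Real.sqrt (∑ n, x n ^ 2) * Real.sqrt (∑ n, y n ^ 2) :=
  Real.sum_mul_le_sqrt_mul_sqrt _ _ _

lemma hasFDerivAt_pen (lam A x : Fin N → ℝ) :
    HasFDerivAt (fun y : Fin N → ℝ => ∑ n, lam n * (y n - A n)) (lf lam) x := by
  have h : (fun y : Fin N → ℝ => ∑ n, lam n * (y n - A n))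
      = fun y => lf lam y - ∑ n, lam n * A n := by
    funext y
    simp [mul_sub, Finset.sum_sub_distrib]
  rw [h]
  exact ((lf lam).hasFDerivAt).sub_const _

/-- stationarity of the minimizer -/
lemma stationary {V : ℝ} (hV : 0 < V) (p : (Fin N → ℝ) → ℝ) (hp : ContDiff ℝ 2 p)
    (A : Fin N → ℝ) (G : Fin N → ℝ) (lam : Fin N → ℝ)
    (hmin : ∀ y, V * p G - ∑ n, lam n * (G n - A n) ≤ V * p y - ∑ n, lam n * (y n - A n)) :
    V • fderiv ℝ p G = lf lam := by
  have hdp : DifferentiableAt ℝ p G := (hp.differentiable two_ne_zero).differentiableAt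
  have h1 : HasFDerivAt (fun y => V * p y - ∑ n, lam n * (y n - A n))
      (V • fderiv ℝ p G - lf lam) G :=
    (hdp.hasFDerivAt.const_mul V).sub (hasFDerivAt_pen lam A G)
  have hloc : IsLocalMin (fun y => V * p y - ∑ n, lam n * (y n - A n)) G :=
    Filter.Eventually.of_forall hmin
  have := hloc.hasFDerivAt_eq_zero h1
  rwa [sub_eq_zero] at this

lemma stationary' {V : ℝ} (hV : 0 < V) (p : (Fin N → ℝ) → ℝ) (hp : ContDiff ℝ 2 p)
    (A : Fin N → ℝ) (G : Fin N → ℝ) (lam : Fin N → ℝ)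
    (hmin : ∀ y, V * p G - ∑ n, lam n * (G n - A n) ≤ V * p y - ∑ n, lam n * (y n - A n))
    (w : Fin N → ℝ) :
    V * fderiv ℝ p G w = ∑ n, lam n * w n := by
  have := stationary hV p hp A G lam hmin
  have h2 : (V • fderiv ℝ p G) w = lf lam w := by rw [this]
  simpa using h2




/-- strong convexity lower bound from Hessian bound -/
lemma strong_lb {δ : ℝ} (p : (Fin N → ℝ) → ℝ) (hp : ContDiff ℝ 2 p)
    (hSC : ∀ y z, δ * ∑ i, z i ^ 2 ≤ fderiv ℝ (fun w => fderiv ℝ p w z) y z)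
    (a b : Fin N → ℝ) :
    p a + fderiv ℝ p a (b - a) + δ / 2 * ∑ i, (b - a) i ^ 2 ≤ p b := by
  set v := b - a with hv
  set κ := δ * ∑ i, v i ^ 2 with hκ
  have hdiffp : Differentiable ℝ p := hp.differentiable two_ne_zero
  have hdp2 : Differentiable ℝ (fderiv ℝ p) :=
    (hp.fderiv_right (m := 1) (by norm_num)).differentiable one_ne_zero
  set c : ℝ → (Fin N → ℝ) := fun t => a + t • v with hc
  have hcd : ∀ t : ℝ, HasDerivAt c v t := by
    intro t
    simpa [hc] using ((hasDerivAt_id t).smul_const v).const_add a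
  -- q w = fderiv p w v, differentiable
  set q : (Fin N → ℝ) → ℝ := fun w => fderiv ℝ p w v with hq
  have hqd : Differentiable ℝ q := by
    have : q = (fun L : (Fin N → ℝ) →L[ℝ] ℝ => L v) ∘ (fderiv ℝ p) := rfl
    rw [this]
    exact (ContinuousLinearMap.apply ℝ ℝ v).differentiable.comp hdp2
  -- φ and ψ
  set φ : ℝ → ℝ := fun t => p (c t) with hφ
  set ψ : ℝ → ℝ := fun t => q (c t) with hψ
  have hφd : ∀ t : ℝ, HasDerivAt φ (ψ t) t := fun t =>
    ((hdiffp (c t)).hasFDerivAt).comp_hasDerivAt t (hcd t)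
  have hψd : ∀ t : ℝ, HasDerivAt ψ (fderiv ℝ q (c t) v) t := fun t =>
    ((hqd (c t)).hasFDerivAt).comp_hasDerivAt t (hcd t)
  have hSC' : ∀ t : ℝ, κ ≤ fderiv ℝ q (c t) v := fun t => hSC (c t) v
  -- step 1 : ψ t ≥ ψ 0 + κ t for t ≥ 0
  have mono1 : Monotone (fun t => ψ t - κ * t) := by
    apply monotone_of_deriv_nonneg
    · exact fun t => ((hψd t).sub ((hasDerivAt_id t).const_mul κ)).differentiableAt
    · intro t
      have : HasDerivAt (fun t => ψ t - κ * t) (fderiv ℝ q (c t) v - κ * 1) t :=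
        (hψd t).sub ((hasDerivAt_id t).const_mul κ)
      rw [this.deriv]
      have := hSC' t
      linarith
  have step1 : ∀ t : ℝ, 0 ≤ t → ψ 0 + κ * t ≤ ψ t := by
    intro t ht
    have := mono1 ht
    simp only [mul_zero, sub_zero] at this
    linarith
  -- step 2 : ζ monotone on Icc 0 1
  set ζ : ℝ → ℝ := fun t => φ t - (ψ 0 * t + κ / 2 * t ^ 2) with hζ
  have hζd : ∀ t : ℝ, HasDerivAt ζ (ψ t - (ψ 0 + κ / 2 * (2 * t))) t := by
    intro t
    exact (hφd t).sub (((hasDerivAt_id t).const_mul (ψ 0)).add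
      (((hasDerivAt_pow 2 t)).const_mul (κ / 2)) |>.congr_deriv (by ring))
  have mono2 : MonotoneOn ζ (Set.Icc (0:ℝ) 1) := by
    apply monotoneOn_of_deriv_nonneg (convex_Icc 0 1)
    · exact fun t _ => ((hζd t).differentiableAt).continuousAt.continuousWithinAt
    · intro t _
      exact ((hζd t).differentiableAt).differentiableWithinAt
    · intro t ht
      rw [interior_Icc] at ht
      rw [(hζd t).deriv]
      have := step1 t (le_of_lt ht.1)
      nlinarith
  have h01 : ζ 0 ≤ ζ 1 := mono2 (by norm_num) (by norm_num) (by norm_num)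
  have hφ0 : φ 0 = p a := by simp [hφ, hc]
  have hφ1 : φ 1 = p b := by simp [hφ, hc, hv]
  have hψ0 : ψ 0 = fderiv ℝ p a v := by simp [hψ, hq, hc]
  simp only [hζ, hφ0, hφ1, hψ0, hκ] at h01
  nlinarith [h01]


section key

lemma hess_apply (p : (Fin N → ℝ) → ℝ) (hp : ContDiff ℝ 2 p) (y z u : Fin N → ℝ) :
    fderiv ℝ (fun w => fderiv ℝ p w z) y u = fderiv ℝ (fderiv ℝ p) y u z := by
  have hdp2 : Differentiable ℝ (fderiv ℝ p) :=
    (hp.fderiv_right (m := 1) (by norm_num)).differentiable one_ne_zero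
  have h : HasFDerivAt (fun w => fderiv ℝ p w z)
      ((ContinuousLinearMap.apply ℝ ℝ z).comp (fderiv ℝ (fderiv ℝ p) y)) y :=
    (ContinuousLinearMap.apply ℝ ℝ z).hasFDerivAt.comp y (hdp2 y).hasFDerivAt
  rw [h.fderiv]
  rfl

lemma hess_symm (p : (Fin N → ℝ) → ℝ) (hp : ContDiff ℝ 2 p) (x v w : Fin N → ℝ) :
    fderiv ℝ (fderiv ℝ p) x v w = fderiv ℝ (fderiv ℝ p) x w v := by
  have hdiffp : Differentiable ℝ p := hp.differentiable two_ne_zero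
  have hdp2 : Differentiable ℝ (fderiv ℝ p) :=
    (hp.fderiv_right (m := 1) (by norm_num)).differentiable one_ne_zero
  exact second_derivative_symmetric (fun y => (hdiffp y).hasFDerivAt)
    ((hdp2 x).hasFDerivAt) v w

lemma key_identity {V : ℝ} (hV : 0 < V) (p : (Fin N → ℝ) → ℝ) (hp : ContDiff ℝ 2 p)
    (A : Fin N → ℝ) (gg : (Fin N → ℝ) → (Fin N → ℝ)) (hg : ContDiff ℝ 2 gg)
    (hmin : ∀ l y, V * p (gg l) - ∑ n, l n * (gg l n - A n)
      ≤ V * p y - ∑ n, l n * (y n - A n))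
    (μ v w : Fin N → ℝ) :
    fderiv ℝ (fderiv ℝ p) (gg μ) (fderiv ℝ gg μ v) w = V⁻¹ * ∑ n, v n * w n := by
  have hdp2 : Differentiable ℝ (fderiv ℝ p) :=
    (hp.fderiv_right (m := 1) (by norm_num)).differentiable one_ne_zero
  have hgd : Differentiable ℝ gg := hg.differentiable two_ne_zero
  have hΦ : HasFDerivAt (fun l => fderiv ℝ p (gg l) w)
      ((ContinuousLinearMap.apply ℝ ℝ w).comp
        ((fderiv ℝ (fderiv ℝ p) (gg μ)).comp (fderiv ℝ gg μ))) μ := by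
    have h1 : HasFDerivAt gg (fderiv ℝ gg μ) μ := (hgd μ).hasFDerivAt
    have h2 : HasFDerivAt (fderiv ℝ p) (fderiv ℝ (fderiv ℝ p) (gg μ)) (gg μ) :=
      (hdp2 (gg μ)).hasFDerivAt
    exact (ContinuousLinearMap.apply ℝ ℝ w).hasFDerivAt.comp μ (h2.comp μ h1)
  have heqfun : (fun l => fderiv ℝ p (gg l) w) = fun l => V⁻¹ * lf w l := by
    funext l
    have h := stationary' hV p hp A (gg l) l (hmin l) w
    rw [lf_apply]
    have h2 : ∑ n, w n * l n = ∑ n, l n * w n := by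
      exact Finset.sum_congr rfl fun n _ => mul_comm _ _
    rw [h2, ← h]
    field_simp
  have hΦ2 : HasFDerivAt (fun l : Fin N → ℝ => V⁻¹ * lf w l) (V⁻¹ • lf w) μ :=
    (lf w).hasFDerivAt.const_mul V⁻¹
  rw [heqfun] at hΦ
  have huniq := hΦ.unique hΦ2
  have happ : ((ContinuousLinearMap.apply ℝ ℝ w).comp
      ((fderiv ℝ (fderiv ℝ p) (gg μ)).comp (fderiv ℝ gg μ))) v = (V⁻¹ • lf w) v := by
    rw [huniq]
  simp only [ContinuousLinearMap.comp_apply, ContinuousLinearMap.apply_apply,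
    ContinuousLinearMap.smul_apply, lf_apply, smul_eq_mul] at happ
  rw [happ]
  congr 1
  exact Finset.sum_congr rfl fun n _ => mul_comm _ _

lemma J_symm {V : ℝ} (hV : 0 < V) (p : (Fin N → ℝ) → ℝ) (hp : ContDiff ℝ 2 p)
    (A : Fin N → ℝ) (gg : (Fin N → ℝ) → (Fin N → ℝ)) (hg : ContDiff ℝ 2 gg)
    (hmin : ∀ l y, V * p (gg l) - ∑ n, l n * (gg l n - A n)
      ≤ V * p y - ∑ n, l n * (y n - A n))
    (μ a b : Fin N → ℝ) :
    ∑ n, a n * fderiv ℝ gg μ b n = ∑ n, b n * fderiv ℝ gg μ a n := by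
  have h1 := key_identity hV p hp A gg hg hmin μ a (fderiv ℝ gg μ b)
  have h2 := key_identity hV p hp A gg hg hmin μ b (fderiv ℝ gg μ a)
  have h3 := hess_symm p hp (gg μ) (fderiv ℝ gg μ a) (fderiv ℝ gg μ b)
  have hVne : (V : ℝ)⁻¹ ≠ 0 := inv_ne_zero (ne_of_gt hV)
  apply mul_left_cancel₀ hVne
  rw [← h1, ← h2]
  exact h3

lemma J_lower {V δ B : ℝ} (hV : 0 < V) (hδ : 0 < δ) (hB0 : 0 < B)
    (p : (Fin N → ℝ) → ℝ) (hp : ContDiff ℝ 2 p)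
    (hSC : ∀ y z, δ * ∑ i, z i ^ 2 ≤ fderiv ℝ (fun w => fderiv ℝ p w z) y z)
    (A : Fin N → ℝ) (gg : (Fin N → ℝ) → (Fin N → ℝ)) (hg : ContDiff ℝ 2 gg)
    (hmin : ∀ l y, V * p (gg l) - ∑ n, l n * (gg l n - A n)
      ≤ V * p y - ∑ n, l n * (y n - A n))
    (μ : Fin N → ℝ)
    (hB : ‖fderiv ℝ (fderiv ℝ p) (gg μ)‖ ≤ B) (v : Fin N → ℝ) :
    δ / (V * B ^ 2) * ∑ n, v n ^ 2 ≤ ∑ n, v n * fderiv ℝ gg μ v n := by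
  set Jv := fderiv ℝ gg μ v with hJv
  have key1 := key_identity hV p hp A gg hg hmin μ v Jv
  have key2 := key_identity hV p hp A gg hg hmin μ v v
  have coco0 : δ * ∑ i, Jv i ^ 2 ≤ fderiv ℝ (fderiv ℝ p) (gg μ) Jv Jv := by
    have := hSC (gg μ) Jv
    rwa [hess_apply p hp (gg μ) Jv Jv] at this
  set a := Real.sqrt (∑ n, Jv n ^ 2) with haa
  set b := Real.sqrt (∑ n, v n ^ 2) with hbb
  have ha2 : a ^ 2 = ∑ n, Jv n ^ 2 :=
    Real.sq_sqrt (Finset.sum_nonneg fun _ _ => sq_nonneg _)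
  have hb2 : b ^ 2 = ∑ n, v n ^ 2 :=
    Real.sq_sqrt (Finset.sum_nonneg fun _ _ => sq_nonneg _)
  have ha0 : 0 ≤ a := Real.sqrt_nonneg _
  have hb0' : 0 ≤ b := Real.sqrt_nonneg _
  -- dot lower bound via coco
  have hdotJ : V * δ * a ^ 2 ≤ ∑ n, v n * Jv n := by
    have : V * (δ * ∑ i, Jv i ^ 2) ≤ V * fderiv ℝ (fderiv ℝ p) (gg μ) Jv Jv :=
      mul_le_mul_of_nonneg_left coco0 (le_of_lt hV)
    rw [key1] at this
    rw [ha2]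
    calc V * δ * (∑ i, Jv i ^ 2) = V * (δ * ∑ i, Jv i ^ 2) := by ring
      _ ≤ V * (V⁻¹ * ∑ n, v n * Jv n) := this
      _ = ∑ n, v n * Jv n := by field_simp
  -- upper bound on b^2
  have hub : b ^ 2 ≤ V * B * (a * b) := by
    have h1 : fderiv ℝ (fderiv ℝ p) (gg μ) Jv v ≤ B * (a * b) := by
      calc fderiv ℝ (fderiv ℝ p) (gg μ) Jv v
          ≤ ‖fderiv ℝ (fderiv ℝ p) (gg μ) Jv v‖ := le_abs_self _
        _ ≤ ‖fderiv ℝ (fderiv ℝ p) (gg μ) Jv‖ * ‖v‖ := ContinuousLinearMap.le_opNorm _ _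
        _ ≤ (‖fderiv ℝ (fderiv ℝ p) (gg μ)‖ * ‖Jv‖) * ‖v‖ :=
            mul_le_mul_of_nonneg_right (ContinuousLinearMap.le_opNorm _ _) (norm_nonneg _)
        _ ≤ (B * a) * b := by
            have h2 : ‖Jv‖ ≤ a := norm_le_sqrt Jv
            have h3 : ‖v‖ ≤ b := norm_le_sqrt v
            have h4 : ‖fderiv ℝ (fderiv ℝ p) (gg μ)‖ * ‖Jv‖ ≤ B * a := by
              apply mul_le_mul hB h2 (norm_nonneg _) (le_of_lt hB0)
            exact mul_le_mul h4 h3 (norm_nonneg _) (by positivity)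
        _ = B * (a * b) := by ring
    have h5 : ∑ n, v n * v n = b ^ 2 := by
      rw [hb2]; exact Finset.sum_congr rfl fun n _ => (sq (v n)).symm ▸ by ring
    calc b ^ 2 = V * (V⁻¹ * ∑ n, v n * v n) := by rw [← h5]; field_simp
      _ = V * fderiv ℝ (fderiv ℝ p) (gg μ) Jv v := by rw [key2]
      _ ≤ V * (B * (a * b)) := mul_le_mul_of_nonneg_left h1 (le_of_lt hV)
      _ = V * B * (a * b) := by ring
  -- combine
  rw [← hb2]
  rcases eq_or_lt_of_le hb0' with hb | hb
  · have : b ^ 2 = 0 := by rw [← hb]; ring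
    rw [this, mul_zero]
    have : 0 ≤ V * δ * a ^ 2 := by positivity
    linarith
  · have hba : b ≤ V * B * a := by
      have h6 : b * b ≤ (V * B * a) * b := by nlinarith
      exact le_of_mul_le_mul_right h6 hb
    have hage : b / (V * B) ≤ a := by
      rw [div_le_iff₀ (by positivity)]
      nlinarith
    have h7 : V * δ * (b / (V * B)) ^ 2 ≤ V * δ * a ^ 2 := by
      apply mul_le_mul_of_nonneg_left _ (by positivity)
      exact pow_le_pow_left₀ (by positivity) hage 2
    have h8 : δ / (V * B ^ 2) * b ^ 2 = V * δ * (b / (V * B)) ^ 2 := by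
      field_simp
    rw [h8]
    linarith

lemma taylor_g {M : ℝ} (gg : (Fin N → ℝ) → (Fin N → ℝ)) (hg : ContDiff ℝ 2 gg)
    (hgM : ∀ l, ‖fderiv ℝ (fderiv ℝ gg) l‖ ≤ M) (lam lamhat : Fin N → ℝ) :
    ‖gg lamhat - gg lam - fderiv ℝ gg lam (lamhat - lam)‖
      ≤ M * ‖lamhat - lam‖ * ‖lamhat - lam‖ := by
  have hM0 : 0 ≤ M := le_trans (norm_nonneg (fderiv ℝ (fderiv ℝ gg) lam)) (hgM lam)
  have hgd : Differentiable ℝ gg := hg.differentiable two_ne_zero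
  have hgd2 : Differentiable ℝ (fderiv ℝ gg) :=
    (hg.fderiv_right (m := 1) (by norm_num)).differentiable one_ne_zero
  have lip : ∀ x : Fin N → ℝ, ‖fderiv ℝ gg x - fderiv ℝ gg lam‖ ≤ M * ‖x - lam‖ := by
    intro x
    exact Convex.norm_image_sub_le_of_norm_fderiv_le
      (fun y _ => hgd2 y) (fun y _ => hgM y) convex_univ
      (Set.mem_univ lam) (Set.mem_univ x)
  set h : (Fin N → ℝ) → (Fin N → ℝ) := fun x => gg x - fderiv ℝ gg lam x with hh
  have hd : ∀ x, HasFDerivAt h (fderiv ℝ gg x - fderiv ℝ gg lam) x := fun x =>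
    (hgd x).hasFDerivAt.sub (fderiv ℝ gg lam).hasFDerivAt
  have bound : ∀ x ∈ segment ℝ lam lamhat,
      ‖fderiv ℝ gg x - fderiv ℝ gg lam‖ ≤ M * ‖lamhat - lam‖ := by
    intro x hx
    rw [segment_eq_image'] at hx
    obtain ⟨t, ht, rfl⟩ := hx
    refine le_trans (lip _) ?_
    have : ‖lam + t • (lamhat - lam) - lam‖ = |t| * ‖lamhat - lam‖ := by
      rw [add_sub_cancel_left, norm_smul, Real.norm_eq_abs]
    rw [this]
    have h1 : |t| ≤ 1 := by
      rw [abs_le]; constructor <;> [linarith [ht.1]; linarith [ht.2]]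
    nlinarith [mul_nonneg (sub_nonneg.mpr h1) (mul_nonneg hM0 (norm_nonneg (lamhat - lam)))]
  have key : ‖h lamhat - h lam‖ ≤ M * ‖lamhat - lam‖ * ‖lamhat - lam‖ := by
    have := Convex.norm_image_sub_le_of_norm_hasFDerivWithin_le
      (f' := fun x => fderiv ℝ gg x - fderiv ℝ gg lam)
      (fun x hx => (hd x).hasFDerivWithinAt) bound (convex_segment lam lamhat)
      (left_mem_segment ℝ lam lamhat) (right_mem_segment ℝ lam lamhat)
    linarith [this]
  have heq : h lamhat - h lam = gg lamhat - gg lam - fderiv ℝ gg lam (lamhat - lam) := by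
    simp only [hh, map_sub]
    abel
  rwa [heq] at key

lemma Q_lower {V δ : ℝ} (hV : 0 < V) (hδ : 0 < δ)
    (p : (Fin N → ℝ) → ℝ) (hp : ContDiff ℝ 2 p)
    (hSC : ∀ y z, δ * ∑ i, z i ^ 2 ≤ fderiv ℝ (fun w => fderiv ℝ p w z) y z)
    (A : Fin N → ℝ) (Glam : Fin N → ℝ) (lam : Fin N → ℝ)
    (hmin : ∀ y, V * p Glam - ∑ n, lam n * (Glam n - A n)
      ≤ V * p y - ∑ n, lam n * (y n - A n))
    (x : Fin N → ℝ) :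
    V * p Glam - ∑ n, lam n * Glam n ≤ V * p x - ∑ n, lam n * x n := by
  have hsl := strong_lb p hp hSC Glam x
  have hst := stationary' hV p hp A Glam lam hmin (x - Glam)
  have hnn : 0 ≤ δ / 2 * ∑ i, (x - Glam) i ^ 2 := by positivity
  have h1 : V * p Glam + ∑ n, lam n * (x - Glam) n ≤ V * p x := by
    have h2 : V * p Glam + V * fderiv ℝ p Glam (x - Glam) ≤ V * p x := by
      nlinarith [hsl]
    rw [hst] at h2
    exact h2
  have h3 : ∑ n, lam n * (x - Glam) n = ∑ n, lam n * x n - ∑ n, lam n * Glam n := by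
    rw [← Finset.sum_sub_distrib]
    exact Finset.sum_congr rfl fun n _ => by simp [mul_sub]
  linarith [h1, h3.symm ▸ h1]

lemma mvt_dot (gg : (Fin N → ℝ) → (Fin N → ℝ)) (hg : ContDiff ℝ 2 gg)
    (lam lamhat : Fin N → ℝ) (κ : ℝ)
    (hlow : ∀ t ∈ Set.Icc (0:ℝ) 1,
      κ ≤ ∑ n, (lamhat - lam) n * fderiv ℝ gg (lam + t • (lamhat - lam)) (lamhat - lam) n) :
    κ ≤ ∑ n, (lamhat - lam) n * (gg lamhat n - gg lam n) := by
  set Δ := lamhat - lam with hΔ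
  have hgd : Differentiable ℝ gg := hg.differentiable two_ne_zero
  set c : ℝ → (Fin N → ℝ) := fun t => lam + t • Δ with hc
  have hcd : ∀ t : ℝ, HasDerivAt c Δ t := by
    intro t
    simpa [hc] using ((hasDerivAt_id t).smul_const Δ).const_add lam
  set φ : ℝ → ℝ := fun t => lf Δ (gg (c t)) with hφ
  have hφd : ∀ t : ℝ, HasDerivAt φ (lf Δ (fderiv ℝ gg (c t) Δ)) t := by
    intro t
    have h1 : HasFDerivAt (fun x => lf Δ (gg x)) ((lf Δ).comp (fderiv ℝ gg (c t))) (c t) :=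
      (lf Δ).hasFDerivAt.comp (c t) (hgd (c t)).hasFDerivAt
    exact h1.comp_hasDerivAt t (hcd t)
  set ζ : ℝ → ℝ := fun t => φ t - κ * t with hζ
  have hζd : ∀ t : ℝ, HasDerivAt ζ (lf Δ (fderiv ℝ gg (c t) Δ) - κ * 1) t := fun t =>
    (hφd t).sub ((hasDerivAt_id t).const_mul κ)
  have mono2 : MonotoneOn ζ (Set.Icc (0:ℝ) 1) := by
    apply monotoneOn_of_deriv_nonneg (convex_Icc 0 1)
    · exact fun t _ => ((hζd t).differentiableAt).continuousAt.continuousWithinAt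
    · exact fun t _ => ((hζd t).differentiableAt).differentiableWithinAt
    · intro t ht
      rw [interior_Icc] at ht
      rw [(hζd t).deriv]
      have := hlow t ⟨le_of_lt ht.1, le_of_lt ht.2⟩
      rw [lf_apply]
      linarith
  have h01 : ζ 0 ≤ ζ 1 := mono2 (by norm_num) (by norm_num) (by norm_num)
  have hc0 : c 0 = lam := by simp [hc]
  have hc1 : c 1 = lamhat := by simp [hc, hΔ]
  simp only [hζ, hφ, hc0, hc1, mul_zero, mul_one, sub_zero, lf_apply] at h01
  have hsum : ∑ n, Δ n * (gg lamhat n - gg lam n)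
      = ∑ n, Δ n * gg lamhat n - ∑ n, Δ n * gg lam n := by
    rw [← Finset.sum_sub_distrib]
    exact Finset.sum_congr rfl fun n _ => by ring
  rw [hsum]
  linarith

lemma entry_eq (gg : (Fin N → ℝ) → (Fin N → ℝ)) (hg : ContDiff ℝ 2 gg)
    (lam v : Fin N → ℝ) (m : Fin N) :
    fderiv ℝ (fun l => gg l m) lam v = fderiv ℝ gg lam v m := by
  have hgd : Differentiable ℝ gg := hg.differentiable two_ne_zero
  have h0 := ((ContinuousLinearMap.proj m : (Fin N → ℝ) →L[ℝ] ℝ).hasFDerivAt).comp lam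
    (hgd lam).hasFDerivAt
  have h : HasFDerivAt (fun l => gg l m)
      ((ContinuousLinearMap.proj m : (Fin N → ℝ) →L[ℝ] ℝ).comp (fderiv ℝ gg lam)) lam := h0
  rw [h.fderiv]
  rfl

lemma dot_single (n : Fin N) (x : Fin N → ℝ) :
    ∑ m, (Pi.single n 1 : Fin N → ℝ) m * x m = x n := by
  rw [Finset.sum_eq_single n]
  · simp
  · intro b _ hb
    simp [Pi.single_apply, hb]
  · simp

end key

end S13

open S13 in
set_option maxHeartbeats 2000000 in
/-- Channel-state-distribution perturbation in Primal2: with minimizers `g s λ` of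
`V P_s(y) - ∑ λ_n (y_n - A_n)` (each `P s` `δ`-strongly convex, twice continuously
differentiable; each `g s` twice continuously differentiable with bounded second
derivatives), slackness `∑_s f_s g_{n,s}(λ*) = A_n` and `∑_s f̂_s g_{n,s}(λ̂*) = A_n`,
`d_n := ∑_s (f_s - f̂_s) g_{n,s}(λ*)`, and invertible `Ĥ` with
`ĥ_{n,m} = ∑_s f̂_s ∂g_{m,s}(λ*)/∂λ_n`, we have `λ̂* = λ* + Ĥ⁻¹ d + O(∑_s (f_s - f̂_s)²)`. -/
theorem stmt13 (N : ℕ) (S : Type) [Fintype S] (f : S → ℝ) (V δ M : ℝ)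
    (hδ : 0 < δ) (hV : 0 < V)
    (hf : ∀ s, 0 ≤ f s) (hf1 : ∑ s, f s = 1)
    (P : S → (Fin N → ℝ) → ℝ) (A : Fin N → ℝ)
    (hP : ∀ s, ContDiff ℝ 2 (P s))
    (hSC : ∀ s (y z : Fin N → ℝ),
      δ * ∑ i, (z i) ^ 2 ≤ fderiv ℝ (fun w => fderiv ℝ (P s) w z) y z)
    (g : S → (Fin N → ℝ) → (Fin N → ℝ))
    (hmin : ∀ s (lam y : Fin N → ℝ),
      V * P s (g s lam) - ∑ n, lam n * (g s lam n - A n)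
        ≤ V * P s y - ∑ n, lam n * (y n - A n))
    (hgC : ∀ s, ContDiff ℝ 2 (g s))
    (hgM : ∀ s l, ‖fderiv ℝ (fderiv ℝ (g s)) l‖ ≤ M)
    (lam : Fin N → ℝ)
    (hslack : ∀ n, ∑ s, f s * g s lam n = A n) :
    ∃ K : ℝ, ∀ (fh : S → ℝ) (lamhat : Fin N → ℝ) (Hh : Matrix (Fin N) (Fin N) ℝ),
      (∀ s, 0 ≤ fh s) → (∑ s, fh s = 1) →
      (∀ n, ∑ s, fh s * g s lamhat n = A n) →
      (∀ n m, Hh n m = ∑ s, fh s * fderiv ℝ (fun l => g s l m) lam (Pi.single n 1)) →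
      IsUnit Hh.det →
      ‖lamhat - lam - Hh⁻¹.mulVec (fun n => ∑ s, (f s - fh s) * g s lam n)‖
        ≤ K * ∑ s, (f s - fh s) ^ 2 := by
  classical
  rcases isEmpty_or_nonempty S with hS | hS
  · refine ⟨0, fun fh lamhat Hh _ h1 _ _ _ => ?_⟩
    rw [Finset.sum_of_isEmpty] at h1
    norm_num at h1
  have hgd : ∀ s, Differentiable ℝ (g s) := fun s => (hgC s).differentiable two_ne_zero
  obtain ⟨s₀⟩ := hS
  have hM0 : 0 ≤ M := le_trans (norm_nonneg (fderiv ℝ (fderiv ℝ (g s₀)) lam)) (hgM s₀ lam)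
  -- a priori radius
  set γ : ℝ := Real.sqrt (∑ n, A n ^ 2) + 2 with hγ
  have hγ0 : 0 < γ := by positivity
  set q0 : S → ℝ := fun s => V * P s (g s lam) - ∑ n, lam n * g s lam n with hq0
  have hQb : ∀ s : S, ∃ r, ∀ y ∈ Metric.closedBall (0 : Fin N → ℝ) γ,
      V * P s y - ∑ n, lam n * y n - q0 s ≤ r := by
    intro s
    have hc : ContinuousOn (fun y : Fin N → ℝ => V * P s y - ∑ n, lam n * y n - q0 s)
        (Metric.closedBall 0 γ) := by
      apply Continuous.continuousOn
      refine ((continuous_const.mul (hP s).continuous).sub ?_).sub continuous_const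
      exact continuous_finset_sum _ fun n _ => continuous_const.mul (continuous_apply n)
    obtain ⟨r, hr⟩ := (isCompact_closedBall (0 : Fin N → ℝ) γ).exists_bound_of_continuousOn hc
    exact ⟨r, fun y hy => le_trans (le_abs_self _) (hr y hy)⟩
  choose rr hrr using hQb
  set R₀ : ℝ := (∑ s, |rr s|) + 1 with hR₀
  have hR₀pos : 0 < R₀ := by
    have : (0:ℝ) ≤ ∑ s, |rr s| := Finset.sum_nonneg fun _ _ => abs_nonneg _
    linarith
  have hrrle : ∀ s, rr s ≤ R₀ := by
    intro s
    have h1 : rr s ≤ |rr s| := le_abs_self _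
    have h2 : |rr s| ≤ ∑ s, |rr s| :=
      Finset.single_le_sum (f := fun s => |rr s|) (fun _ _ => abs_nonneg _) (mem_univ s)
    linarith
  -- a priori bound on lamhat
  have apriori : ∀ (fh : S → ℝ) (lamhat : Fin N → ℝ), (∀ s, 0 ≤ fh s) → (∑ s, fh s = 1) →
      (∀ n, ∑ s, fh s * g s lamhat n = A n) →
      Real.sqrt (∑ n, (lamhat n - lam n) ^ 2) ≤ R₀ := by
    intro fh lamhat hfh hfh1 heq
    by_cases hT0 : (∑ n, (lamhat n - lam n) ^ 2) = 0
    · rw [hT0, Real.sqrt_zero]; exact le_of_lt hR₀pos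
    have hT2nn : 0 ≤ ∑ n, (lamhat n - lam n) ^ 2 := Finset.sum_nonneg fun _ _ => sq_nonneg _
    have hT2pos : 0 < ∑ n, (lamhat n - lam n) ^ 2 := lt_of_le_of_ne hT2nn (Ne.symm hT0)
    set T := Real.sqrt (∑ n, (lamhat n - lam n) ^ 2) with hT
    have hTpos : 0 < T := Real.sqrt_pos.mpr hT2pos
    have hTsq : T ^ 2 = ∑ n, (lamhat n - lam n) ^ 2 := Real.sq_sqrt hT2nn
    set u : Fin N → ℝ := fun n => T⁻¹ * (lamhat n - lam n) with hu
    have hu2 : ∑ n, u n ^ 2 = 1 := by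
      have : ∑ n, u n ^ 2 = T⁻¹ ^ 2 * ∑ n, (lamhat n - lam n) ^ 2 := by
        rw [Finset.mul_sum]
        exact Finset.sum_congr rfl fun n _ => by rw [hu]; ring
      rw [this, ← hTsq]
      field_simp
    have hΔu : ∀ n, lamhat n - lam n = T * u n := by
      intro n
      rw [hu]
      field_simp
    -- some s has small dot
    set C : ℝ := Real.sqrt (∑ n, A n ^ 2) + 1 with hC
    have hex : ∃ s, ∑ n, u n * g s lamhat n ≤ C := by
      by_contra hco
      push_neg at hco
      have h1 : ∑ s, fh s * (∑ n, u n * g s lamhat n) = ∑ n, u n * A n := by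
        calc ∑ s, fh s * ∑ n, u n * g s lamhat n
            = ∑ s, ∑ n, u n * (fh s * g s lamhat n) := by
              refine Finset.sum_congr rfl fun s _ => ?_
              rw [Finset.mul_sum]
              exact Finset.sum_congr rfl fun n _ => by ring
          _ = ∑ n, ∑ s, u n * (fh s * g s lamhat n) := Finset.sum_comm
          _ = ∑ n, u n * A n := by
              refine Finset.sum_congr rfl fun n _ => ?_
              rw [← Finset.mul_sum, heq n]
      have h2 : C ≤ ∑ s, fh s * (∑ n, u n * g s lamhat n) := by
        calc C = (∑ s, fh s) * C := by rw [hfh1, one_mul]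
          _ = ∑ s, fh s * C := Finset.sum_mul _ _ _
          _ ≤ ∑ s, fh s * (∑ n, u n * g s lamhat n) :=
              Finset.sum_le_sum fun s _ =>
                mul_le_mul_of_nonneg_left (le_of_lt (hco s)) (hfh s)
      have h3 : ∑ n, u n * A n ≤ Real.sqrt (∑ n, A n ^ 2) := by
        have := cs u A
        rwa [hu2, Real.sqrt_one, one_mul] at this
      rw [h1] at h2
      rw [hC] at h2
      linarith
    obtain ⟨s, hs⟩ := hex
    -- compare minimizer with γ • u
    have hmin1 := hmin s lamhat (γ • u)
    set gS := g s lamhat with hgS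
    have hpen : ∀ x : Fin N → ℝ, ∑ n, lamhat n * (x n - A n)
        = (∑ n, lam n * x n) + (∑ n, (lamhat n - lam n) * x n) - ∑ n, lamhat n * A n := by
      intro x
      rw [← Finset.sum_add_distrib, ← Finset.sum_sub_distrib]
      exact Finset.sum_congr rfl fun n _ => by ring
    rw [hpen gS, hpen (γ • u)] at hmin1
    -- Q lower bound
    have hQgS : q0 s ≤ V * P s gS - ∑ n, lam n * gS n :=
      Q_lower hV hδ (P s) (hP s) (hSC s) A (g s lam) lam (hmin s lam) gS
    -- dot Δ gS ≤ T * C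
    have hdot1 : ∑ n, (lamhat n - lam n) * gS n ≤ T * C := by
      have : ∑ n, (lamhat n - lam n) * gS n = T * ∑ n, u n * gS n := by
        rw [Finset.mul_sum]
        exact Finset.sum_congr rfl fun n _ => by rw [hΔu n]; ring
      rw [this]
      exact mul_le_mul_of_nonneg_left hs (le_of_lt hTpos)
    -- dot Δ (γ u) = γ T
    have hdot2 : ∑ n, (lamhat n - lam n) * (γ • u) n = γ * T := by
      have : ∀ n, (lamhat n - lam n) * (γ • u) n = γ * T * u n ^ 2 := by
        intro n
        rw [hΔu n]
        simp [Pi.smul_apply, smul_eq_mul]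
        ring
      rw [Finset.sum_congr rfl fun n _ => this n, ← Finset.mul_sum, hu2, mul_one]
    -- Q(γu) bound
    have hmem : (γ • u) ∈ Metric.closedBall (0 : Fin N → ℝ) γ := by
      rw [mem_closedBall_zero_iff, norm_smul, Real.norm_eq_abs, abs_of_pos hγ0]
      have h1 : ‖u‖ ≤ 1 := by
        have := norm_le_sqrt u
        rwa [hu2, Real.sqrt_one] at this
      nlinarith
    have hQy := hrr s (γ • u) hmem
    -- combine
    have hfinal : T * (γ - C) ≤ rr s := by nlinarith [hmin1, hQgS, hdot1, hdot2, hQy]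
    have hγC : γ - C = 1 := by rw [hγ, hC]; ring
    rw [hγC, mul_one] at hfinal
    exact le_trans hfinal (hrrle s)

  -- Hessian norm bound on the ball of radius R₀
  have hBs : ∀ s : S, ∃ r, ∀ μ ∈ Metric.closedBall lam R₀,
      ‖fderiv ℝ (fderiv ℝ (P s)) (g s μ)‖ ≤ r := by
    intro s
    have hcont : ContinuousOn (fun μ : Fin N → ℝ => fderiv ℝ (fderiv ℝ (P s)) (g s μ))
        (Metric.closedBall lam R₀) := by
      apply Continuous.continuousOn
      have h1 : ContDiff ℝ 1 (fderiv ℝ (P s)) := (hP s).fderiv_right (le_refl 2)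
      exact (h1.continuous_fderiv one_ne_zero).comp (hgd s).continuous
    exact (isCompact_closedBall lam R₀).exists_bound_of_continuousOn
      (f := fun μ : Fin N → ℝ => fderiv ℝ (fderiv ℝ (P s)) (g s μ)) hcont
  choose BB hBB using hBs
  set B : ℝ := (∑ s, |BB s|) + 1 with hB
  have hB0 : 0 < B := by
    have : (0:ℝ) ≤ ∑ s, |BB s| := Finset.sum_nonneg fun _ _ => abs_nonneg _
    rw [hB]; linarith
  have hBle : ∀ s, ∀ μ ∈ Metric.closedBall lam R₀,
      ‖fderiv ℝ (fderiv ℝ (P s)) (g s μ)‖ ≤ B := by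
    intro s μ hμ
    refine le_trans (hBB s μ hμ) ?_
    have h1 : BB s ≤ |BB s| := le_abs_self _
    have h2 : |BB s| ≤ ∑ s, |BB s| :=
      Finset.single_le_sum (f := fun s => |BB s|) (fun _ _ => abs_nonneg _) (mem_univ s)
    rw [hB]; linarith
  set cR : ℝ := δ / (V * B ^ 2) with hcR
  have hcR0 : 0 < cR := by rw [hcR]; positivity
  set G2 : ℝ := ∑ n, ∑ s, (g s lam n) ^ 2 with hG2
  have hG20 : 0 ≤ G2 := Finset.sum_nonneg fun _ _ => Finset.sum_nonneg fun _ _ => sq_nonneg _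
  refine ⟨Real.sqrt N * M * G2 / cR ^ 3, ?_⟩
  intro fh lamhat Hh hfh hfh1 heq hH hdet
  set ε : ℝ := ∑ s, (f s - fh s) ^ 2 with hε
  have hεnn : 0 ≤ ε := Finset.sum_nonneg fun _ _ => sq_nonneg _
  set T2 : ℝ := ∑ n, (lamhat n - lam n) ^ 2 with hT2
  have hT2nn : 0 ≤ T2 := Finset.sum_nonneg fun _ _ => sq_nonneg _
  have hTle : Real.sqrt T2 ≤ R₀ := apriori fh lamhat hfh hfh1 heq
  have hsub2 : ∑ n, ((lamhat - lam) n) ^ 2 = T2 := by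
    rw [hT2]; exact Finset.sum_congr rfl fun n _ => by simp
  have hnΔ : ‖lamhat - lam‖ ≤ Real.sqrt T2 := by
    have := norm_le_sqrt (lamhat - lam)
    rwa [hsub2] at this
  have hJlow : ∀ s, ∀ μ ∈ Metric.closedBall lam R₀, ∀ v : Fin N → ℝ,
      cR * ∑ n, v n ^ 2 ≤ ∑ n, v n * fderiv ℝ (g s) μ v n := by
    intro s μ hμ v
    rw [hcR]
    exact J_lower hV hδ hB0 (P s) (hP s) (hSC s) A (g s) (hgC s) (hmin s) μ (hBle s μ hμ) v
  set d' : Fin N → ℝ := fun n => ∑ s, (f s - fh s) * g s lam n with hd'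
  have hd'eq : ∀ n, ∑ s, fh s * (g s lamhat n - g s lam n) = d' n := by
    intro n
    have h1 : ∑ s, fh s * (g s lamhat n - g s lam n)
        = ∑ s, fh s * g s lamhat n - ∑ s, fh s * g s lam n := by
      rw [← Finset.sum_sub_distrib]
      exact Finset.sum_congr rfl fun s _ => by ring
    have h2 : d' n = ∑ s, f s * g s lam n - ∑ s, fh s * g s lam n := by
      rw [hd', ← Finset.sum_sub_distrib]
      exact Finset.sum_congr rfl fun s _ => by ring
    rw [h1, heq n, h2, hslack n]
  -- step (iii): strong monotonicity lower bound
  have hlow_s : ∀ s, cR * T2 ≤ ∑ n, (lamhat n - lam n) * (g s lamhat n - g s lam n) := by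
    intro s
    have hmvt := mvt_dot (g s) (hgC s) lam lamhat (cR * T2) ?side
    · calc cR * T2 ≤ ∑ n, (lamhat - lam) n * (g s lamhat n - g s lam n) := hmvt
        _ = ∑ n, (lamhat n - lam n) * (g s lamhat n - g s lam n) :=
          Finset.sum_congr rfl fun n _ => by simp
    case side =>
      intro t ht
      have hmem : lam + t • (lamhat - lam) ∈ Metric.closedBall lam R₀ := by
        rw [Metric.mem_closedBall, dist_eq_norm]
        have heq2 : lam + t • (lamhat - lam) - lam = t • (lamhat - lam) := by abel
        rw [heq2, norm_smul, Real.norm_eq_abs]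
        have h1 : |t| ≤ 1 := abs_le.mpr ⟨by linarith [ht.1], ht.2⟩
        nlinarith [norm_nonneg (lamhat - lam), hnΔ, hTle, Real.sqrt_nonneg T2]
      have h2 := hJlow s _ hmem (lamhat - lam)
      rwa [hsub2] at h2
  have hlow : cR * T2 ≤ ∑ n, (lamhat n - lam n) * d' n := by
    have hswap : ∑ n, (lamhat n - lam n) * d' n
        = ∑ s, fh s * ∑ n, (lamhat n - lam n) * (g s lamhat n - g s lam n) := by
      calc ∑ n, (lamhat n - lam n) * d' n
          = ∑ n, (lamhat n - lam n) * ∑ s, fh s * (g s lamhat n - g s lam n) :=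
            Finset.sum_congr rfl fun n _ => by rw [hd'eq n]
        _ = ∑ n, ∑ s, fh s * ((lamhat n - lam n) * (g s lamhat n - g s lam n)) := by
            refine Finset.sum_congr rfl fun n _ => ?_
            rw [Finset.mul_sum]
            exact Finset.sum_congr rfl fun s _ => by ring
        _ = ∑ s, ∑ n, fh s * ((lamhat n - lam n) * (g s lamhat n - g s lam n)) :=
            Finset.sum_comm
        _ = ∑ s, fh s * ∑ n, (lamhat n - lam n) * (g s lamhat n - g s lam n) :=
            Finset.sum_congr rfl fun s _ => (Finset.mul_sum _ _ _).symm
    rw [hswap]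
    calc cR * T2 = ∑ s, fh s * (cR * T2) := by rw [← Finset.sum_mul, hfh1, one_mul]
      _ ≤ ∑ s, fh s * ∑ n, (lamhat n - lam n) * (g s lamhat n - g s lam n) :=
          Finset.sum_le_sum fun s _ => mul_le_mul_of_nonneg_left (hlow_s s) (hfh s)
  -- step (iv): T2 ≤ ε G2 / cR²
  have hd2 : ∑ n, d' n ^ 2 ≤ ε * G2 := by
    rw [hG2, Finset.mul_sum]
    apply Finset.sum_le_sum
    intro n _
    have hcs2 := Finset.sum_mul_sq_le_sq_mul_sq Finset.univ
      (fun s => f s - fh s) (fun s => g s lam n)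
    calc d' n ^ 2 ≤ (∑ s, (f s - fh s) ^ 2) * ∑ s, (g s lam n) ^ 2 := by
          rw [hd']; exact hcs2
      _ = ε * ∑ s, (g s lam n) ^ 2 := by rw [hε]
  have hT2G : T2 ≤ ε * G2 / cR ^ 2 := by
    by_cases h0 : T2 = 0
    · rw [h0]; positivity
    have hT2p : 0 < T2 := lt_of_le_of_ne hT2nn (Ne.symm h0)
    have h1 : ∑ n, (lamhat n - lam n) * d' n
        ≤ Real.sqrt T2 * Real.sqrt (∑ n, d' n ^ 2) := by
      have := cs (fun n => lamhat n - lam n) d'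
      rwa [← hT2] at this
    have h2 : Real.sqrt (∑ n, d' n ^ 2) ≤ Real.sqrt (ε * G2) := Real.sqrt_le_sqrt hd2
    have h3 : cR * T2 ≤ Real.sqrt T2 * Real.sqrt (ε * G2) := by
      refine le_trans hlow (le_trans h1 ?_)
      exact mul_le_mul_of_nonneg_left h2 (Real.sqrt_nonneg _)
    have h4 : Real.sqrt T2 * Real.sqrt T2 = T2 := Real.mul_self_sqrt hT2nn
    have hsp : 0 < Real.sqrt T2 := Real.sqrt_pos.mpr hT2p
    have h5 : cR * Real.sqrt T2 ≤ Real.sqrt (ε * G2) := by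
      apply le_of_mul_le_mul_right _ hsp
      calc cR * Real.sqrt T2 * Real.sqrt T2 = cR * T2 := by rw [mul_assoc, h4]
        _ ≤ Real.sqrt T2 * Real.sqrt (ε * G2) := h3
        _ = Real.sqrt (ε * G2) * Real.sqrt T2 := mul_comm _ _
    have h6 : (cR * Real.sqrt T2) ^ 2 ≤ Real.sqrt (ε * G2) ^ 2 :=
      pow_le_pow_left₀ (by positivity) h5 2
    rw [Real.sq_sqrt (by positivity : (0:ℝ) ≤ ε * G2)] at h6
    have h7 : (cR * Real.sqrt T2) ^ 2 = cR ^ 2 * T2 := by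
      rw [mul_pow, Real.sq_sqrt hT2nn]
    rw [h7] at h6
    exact (le_div_iff₀ (by positivity)).mpr (by linarith)
  -- step (v): Taylor remainder bounds
  have hrTb : ∀ s n, |g s lamhat n - g s lam n - fderiv ℝ (g s) lam (lamhat - lam) n|
      ≤ M * T2 := by
    intro s n
    have h1 := taylor_g (g s) (hgC s) (hgM s) lam lamhat
    have h2 : |g s lamhat n - g s lam n - fderiv ℝ (g s) lam (lamhat - lam) n|
        ≤ ‖g s lamhat - g s lam - fderiv ℝ (g s) lam (lamhat - lam)‖ := by
      have := norm_le_pi_norm (g s lamhat - g s lam - fderiv ℝ (g s) lam (lamhat - lam)) n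
      simpa using this
    have h4 : M * ‖lamhat - lam‖ * ‖lamhat - lam‖ ≤ M * T2 := by
      have h5 : Real.sqrt T2 * Real.sqrt T2 = T2 := Real.mul_self_sqrt hT2nn
      have h6 : ‖lamhat - lam‖ * ‖lamhat - lam‖ ≤ T2 := by
        nlinarith [norm_nonneg (lamhat - lam), Real.sqrt_nonneg T2, hnΔ]
      calc M * ‖lamhat - lam‖ * ‖lamhat - lam‖ = M * (‖lamhat - lam‖ * ‖lamhat - lam‖) := by ring
        _ ≤ M * T2 := mul_le_mul_of_nonneg_left h6 hM0
    exact le_trans h2 (le_trans h1 h4)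
  -- step (vi): matrix action of Hh
  have hHact : ∀ (x : Fin N → ℝ) (n : Fin N),
      Hh.mulVec x n = ∑ s, fh s * fderiv ℝ (g s) lam x n := by
    intro x n
    have h1 : Hh.mulVec x n = ∑ m, Hh n m * x m := rfl
    rw [h1]
    calc ∑ m, Hh n m * x m
        = ∑ m, (∑ s, fh s * fderiv ℝ (g s) lam (Pi.single n 1) m) * x m := by
          refine Finset.sum_congr rfl fun m _ => ?_
          rw [hH n m]
          congr 1
          exact Finset.sum_congr rfl fun s _ => by
            rw [entry_eq (g s) (hgC s) lam (Pi.single n 1) m]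
      _ = ∑ m, ∑ s, fh s * fderiv ℝ (g s) lam (Pi.single n 1) m * x m :=
          Finset.sum_congr rfl fun m _ => Finset.sum_mul _ _ _
      _ = ∑ s, ∑ m, fh s * fderiv ℝ (g s) lam (Pi.single n 1) m * x m := Finset.sum_comm
      _ = ∑ s, fh s * ∑ m, x m * fderiv ℝ (g s) lam (Pi.single n 1) m := by
          refine Finset.sum_congr rfl fun s _ => ?_
          rw [Finset.mul_sum]
          exact Finset.sum_congr rfl fun m _ => by ring
      _ = ∑ s, fh s * ∑ m, (Pi.single n 1 : Fin N → ℝ) m * fderiv ℝ (g s) lam x m := by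
          refine Finset.sum_congr rfl fun s _ => ?_
          congr 1
          exact J_symm hV (P s) (hP s) A (g s) (hgC s) (hmin s) lam x (Pi.single n 1)
      _ = ∑ s, fh s * fderiv ℝ (g s) lam x n := by
          refine Finset.sum_congr rfl fun s _ => ?_
          rw [dot_single n (fderiv ℝ (g s) lam x)]
  -- step (vii): exact expansion
  set rb : Fin N → ℝ := fun n =>
    ∑ s, fh s * (g s lamhat n - g s lam n - fderiv ℝ (g s) lam (lamhat - lam) n) with hrb
  have hd'vec : d' = Hh.mulVec (lamhat - lam) + rb := by
    funext n
    rw [Pi.add_apply, hHact (lamhat - lam) n, ← hd'eq n, hrb, ← Finset.sum_add_distrib]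
    exact Finset.sum_congr rfl fun s _ => by ring
  have hinv : Hh⁻¹.mulVec d' = (lamhat - lam) + Hh⁻¹.mulVec rb := by
    rw [hd'vec, Matrix.mulVec_add, Matrix.mulVec_mulVec,
      Matrix.nonsing_inv_mul Hh hdet, Matrix.one_mulVec]
  have hgoalvec : lamhat - lam - Hh⁻¹.mulVec d' = -(Hh⁻¹.mulVec rb) := by
    rw [hinv]; abel
  rw [hgoalvec, norm_neg]
  -- step (viii/ix): bound on the inverse applied to rb
  set w : Fin N → ℝ := Hh⁻¹.mulVec rb with hw
  have hHw : Hh.mulVec w = rb := by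
    rw [hw, Matrix.mulVec_mulVec, Matrix.mul_nonsing_inv Hh hdet, Matrix.one_mulVec]
  have hlam_mem : lam ∈ Metric.closedBall lam R₀ :=
    Metric.mem_closedBall_self (le_of_lt hR₀pos)
  have hlw : cR * ∑ n, w n ^ 2 ≤ ∑ n, w n * rb n := by
    have h1 : ∑ n, w n * rb n = ∑ s, fh s * ∑ n, w n * fderiv ℝ (g s) lam w n := by
      calc ∑ n, w n * rb n = ∑ n, w n * Hh.mulVec w n :=
            Finset.sum_congr rfl fun n _ => by rw [hHw]
        _ = ∑ n, w n * ∑ s, fh s * fderiv ℝ (g s) lam w n :=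
            Finset.sum_congr rfl fun n _ => by rw [hHact w n]
        _ = ∑ n, ∑ s, fh s * (w n * fderiv ℝ (g s) lam w n) := by
            refine Finset.sum_congr rfl fun n _ => ?_
            rw [Finset.mul_sum]
            exact Finset.sum_congr rfl fun s _ => by ring
        _ = ∑ s, ∑ n, fh s * (w n * fderiv ℝ (g s) lam w n) := Finset.sum_comm
        _ = ∑ s, fh s * ∑ n, w n * fderiv ℝ (g s) lam w n :=
            Finset.sum_congr rfl fun s _ => (Finset.mul_sum _ _ _).symm
    rw [h1]
    calc cR * ∑ n, w n ^ 2 = ∑ s, fh s * (cR * ∑ n, w n ^ 2) := by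
          rw [← Finset.sum_mul, hfh1, one_mul]
      _ ≤ ∑ s, fh s * ∑ n, w n * fderiv ℝ (g s) lam w n :=
          Finset.sum_le_sum fun s _ =>
            mul_le_mul_of_nonneg_left (hJlow s lam hlam_mem w) (hfh s)
  have hrbb : ∀ n, |rb n| ≤ M * T2 := by
    intro n
    calc |rb n| ≤ ∑ s, |fh s * (g s lamhat n - g s lam n
          - fderiv ℝ (g s) lam (lamhat - lam) n)| := by
          rw [hrb]; exact Finset.abs_sum_le_sum_abs _ _
      _ ≤ ∑ s, fh s * (M * T2) := by
          refine Finset.sum_le_sum fun s _ => ?_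
          rw [abs_mul, abs_of_nonneg (hfh s)]
          exact mul_le_mul_of_nonneg_left (hrTb s n) (hfh s)
      _ = M * T2 := by rw [← Finset.sum_mul, hfh1, one_mul]
  have hrb2 : ∑ n, rb n ^ 2 ≤ (N : ℝ) * (M * T2) ^ 2 := by
    calc ∑ n, rb n ^ 2 ≤ ∑ _n : Fin N, (M * T2) ^ 2 := by
          refine Finset.sum_le_sum fun n _ => ?_
          rw [← sq_abs]
          exact pow_le_pow_left₀ (abs_nonneg _) (hrbb n) 2
      _ = (N : ℝ) * (M * T2) ^ 2 := by
          rw [Finset.sum_const, Finset.card_univ, Fintype.card_fin, nsmul_eq_mul]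
  have hwn : ‖w‖ ≤ Real.sqrt N * (M * T2) / cR := by
    have hMT2 : 0 ≤ M * T2 := mul_nonneg hM0 hT2nn
    have haw : Real.sqrt (∑ n, w n ^ 2) ≤ Real.sqrt N * (M * T2) / cR := by
      by_cases h0 : (∑ n, w n ^ 2) = 0
      · rw [h0, Real.sqrt_zero]; positivity
      have hwnn : 0 ≤ ∑ n, w n ^ 2 := Finset.sum_nonneg fun _ _ => sq_nonneg _
      have hwp : 0 < ∑ n, w n ^ 2 := lt_of_le_of_ne hwnn (Ne.symm h0)
      have hsp : 0 < Real.sqrt (∑ n, w n ^ 2) := Real.sqrt_pos.mpr hwp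
      have h1 : ∑ n, w n * rb n
          ≤ Real.sqrt (∑ n, w n ^ 2) * Real.sqrt (∑ n, rb n ^ 2) := cs w rb
      have h2 : Real.sqrt (∑ n, rb n ^ 2) ≤ Real.sqrt N * (M * T2) := by
        refine le_trans (Real.sqrt_le_sqrt hrb2) ?_
        rw [Real.sqrt_mul (by positivity : (0:ℝ) ≤ (N:ℝ)), Real.sqrt_sq hMT2]
      have h3 : cR * Real.sqrt (∑ n, w n ^ 2) ≤ Real.sqrt N * (M * T2) := by
        apply le_of_mul_le_mul_right _ hsp
        calc cR * Real.sqrt (∑ n, w n ^ 2) * Real.sqrt (∑ n, w n ^ 2)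
            = cR * ∑ n, w n ^ 2 := by rw [mul_assoc, Real.mul_self_sqrt hwnn]
          _ ≤ ∑ n, w n * rb n := hlw
          _ ≤ Real.sqrt (∑ n, w n ^ 2) * Real.sqrt (∑ n, rb n ^ 2) := h1
          _ ≤ Real.sqrt (∑ n, w n ^ 2) * (Real.sqrt N * (M * T2)) :=
              mul_le_mul_of_nonneg_left h2 (Real.sqrt_nonneg _)
          _ = Real.sqrt N * (M * T2) * Real.sqrt (∑ n, w n ^ 2) := by ring
      rw [le_div_iff₀ hcR0]
      calc Real.sqrt (∑ n, w n ^ 2) * cR = cR * Real.sqrt (∑ n, w n ^ 2) := mul_comm _ _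
        _ ≤ Real.sqrt N * (M * T2) := h3
    exact le_trans (norm_le_sqrt w) haw
  calc ‖w‖ ≤ Real.sqrt N * (M * T2) / cR := hwn
    _ ≤ Real.sqrt N * (M * (ε * G2 / cR ^ 2)) / cR := by
        gcongr
    _ = Real.sqrt N * M * G2 / cR ^ 3 * ε := by
        field_simp
end
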